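/- For the Heisenberg Hamiltonian H = Σᵢ (XᵢXᵢ₊₁ + YᵢYᵢ₊₁ + ZᵢZᵢ₊₁) on a periodic chain of N ≥ 3 sites, the quantity Q₃ = Σᵢ (σᵢ × σᵢ₊₁) · σᵢ₊₂ = Σᵢ (XᵢYᵢ₊₁Zᵢ₊₂ + YᵢZᵢ₊₁Xᵢ₊₂ + ZᵢXᵢ₊₁Yᵢ₊₂ - YᵢXᵢ₊₁Zᵢ₊₂ - ZᵢYᵢ₊₁Xᵢ₊₂ - XᵢZᵢ₊₁Yᵢ₊₂) commutes with H. -/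

import Mathlib

open Complex
open scoped Classical

noncomputable def σx : Matrix (Fin 2) (Fin 2) ℂ := !![0, 1; 1, 0]
noncomputable def σy : Matrix (Fin 2) (Fin 2) ℂ := !![0, -I; I, 0]
noncomputable def σz : Matrix (Fin 2) (Fin 2) ℂ := !![1, 0; 0, -1]

/-- The single-site operator `M` acting on site `i` of a spin-1/2 chain of `N` sites
(tensored with the identity on all other sites). -/
noncomputable def pauliAt (N : ℕ) (i : Fin N) (M : Matrix (Fin 2) (Fin 2) ℂ) :
    Matrix (Fin N → Fin 2) (Fin N → Fin 2) ℂ :=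
  fun f g => M (f i) (g i) * if ∀ j, j ≠ i → f j = g j then 1 else 0

section Base
variable {N : ℕ} [NeZero N]

lemma pauliSumCollapse (f : Fin N → Fin 2) (i : Fin N) (F : (Fin N → Fin 2) → ℂ)
    (hF : ∀ h, ¬ (∀ j, j ≠ i → f j = h j) → F h = 0) :
    ∑ h : Fin N → Fin 2, F h = ∑ t : Fin 2, F (Function.update f i t) := by
  classical
  have h1 : ∑ h ∈ Finset.univ.filter (fun h => ∀ j, j ≠ i → f j = h j), F h
      = ∑ h : Fin N → Fin 2, F h :=
    Finset.sum_filter_of_ne (fun h _ hne => by by_contra hc; exact hne (hF h hc))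
  have h2 : Finset.univ.filter (fun h => ∀ j, j ≠ i → f j = h j)
      = Finset.image (fun t => Function.update f i t) Finset.univ := by
    ext h
    simp only [Finset.mem_filter, Finset.mem_image, Finset.mem_univ, true_and]
    constructor
    · intro hP
      refine ⟨h i, funext fun j => ?_⟩
      by_cases hj : j = i
      · subst hj; simp
      · simp [Function.update_apply, hj, hP j hj]
    · rintro ⟨t, rfl⟩ j hj
      simp [Function.update_apply, hj]
  rw [← h1, h2, Finset.sum_image (fun a _ b _ hab => Function.update_injective f i hab)]

lemma pauliAt_mul_same (i : Fin N) (M M' : Matrix (Fin 2) (Fin 2) ℂ) :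
    pauliAt N i M * pauliAt N i M' = pauliAt N i (M * M') := by
  ext f g
  show (∑ h, pauliAt N i M f h * pauliAt N i M' h g) = _
  rw [pauliSumCollapse f i _ (fun h hne => by simp [pauliAt, hne])]
  simp only [pauliAt, Function.update_apply]
  by_cases hfg : ∀ j, j ≠ i → f j = g j
  · have c1 : ∀ t : Fin 2, (∀ j, j ≠ i → f j = if j = i then t else f j) := by
      intro t j hj; simp [hj]
    have c2 : ∀ t : Fin 2, (∀ j, j ≠ i → (if j = i then t else f j) = g j) := by
      intro t j hj; simp [hj, hfg j hj]
    simp only [if_pos (c1 _), if_pos (c2 _), if_pos hfg, Matrix.mul_apply]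
    rw [Finset.sum_mul]
    congr 1; funext t
    simp
  · have c2 : ∀ t : Fin 2, ¬ (∀ j, j ≠ i → (if j = i then t else f j) = g j) := by
      intro t hc
      exact hfg (fun j hj => by have := hc j hj; simpa [hj] using this)
    simp [if_neg hfg, if_neg (c2 _)]

lemma pauliAt_mul_distinct {i j : Fin N} (hij : i ≠ j) (M M' : Matrix (Fin 2) (Fin 2) ℂ) :
    pauliAt N i M * pauliAt N j M'
      = fun f g => M (f i) (g i) * M' (f j) (g j)
          * if ∀ k, k ≠ i → k ≠ j → f k = g k then 1 else 0 := by
  ext f g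
  show (∑ h, pauliAt N i M f h * pauliAt N j M' h g) = _
  rw [pauliSumCollapse f i _ (fun h hne => by simp [pauliAt, hne])]
  simp only [pauliAt, Function.update_apply]
  have c1 : ∀ t : Fin 2, (∀ k, k ≠ i → f k = if k = i then t else f k) := by
    intro t k hk; simp [hk]
  simp only [if_pos (c1 _)]
  have key : ∀ t : Fin 2, (∀ k, k ≠ j → (if k = i then t else f k) = g k)
      ↔ (t = g i ∧ ∀ k, k ≠ i → k ≠ j → f k = g k) := by
    intro t
    constructor
    · intro hc
      refine ⟨by simpa using hc i hij, fun k hki hkj => by simpa [hki] using hc k hkj⟩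
    · rintro ⟨rfl, hrest⟩ k hkj
      by_cases hk : k = i
      · simp [hk]
      · simpa [hk] using hrest k hk hkj
  have : ∀ t : Fin 2,
      (if ∀ k, k ≠ j → (if k = i then t else f k) = g k then (1:ℂ) else 0)
      = (if t = g i then 1 else 0) * (if ∀ k, k ≠ i → k ≠ j → f k = g k then 1 else 0) := by
    intro t
    rw [if_congr (key t) rfl rfl, ite_and]
    by_cases h1 : t = g i <;> simp [h1]
  simp only [this, if_neg (show ¬ j = i from fun h => hij h.symm)]
  simp only [mul_one, one_mul, mul_ite, ite_mul, mul_zero, zero_mul]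
  by_cases hC : ∀ k, k ≠ i → k ≠ j → f k = g k
  · simp [hC, Finset.sum_ite_eq']
  · simp [hC]
lemma pauliAt_commute {i j : Fin N} (hij : i ≠ j) (M M' : Matrix (Fin 2) (Fin 2) ℂ) :
    Commute (pauliAt N i M) (pauliAt N j M') := by
  unfold Commute SemiconjBy
  rw [pauliAt_mul_distinct hij, pauliAt_mul_distinct hij.symm]
  funext f g
  have : (∀ k, k ≠ i → k ≠ j → f k = g k) ↔ (∀ k, k ≠ j → k ≠ i → f k = g k) :=
    ⟨fun h k h1 h2 => h k h2 h1, fun h k h1 h2 => h k h2 h1⟩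
  rw [if_congr this rfl rfl]
  ring

lemma pauliAt_one (i : Fin N) : pauliAt N i (1 : Matrix (Fin 2) (Fin 2) ℂ) = 1 := by
  ext f g
  simp only [pauliAt, Matrix.one_apply]
  by_cases h1 : f i = g i <;> by_cases h2 : ∀ j, j ≠ i → f j = g j
  · have : f = g := funext fun j => by
      by_cases hj : j = i
      · rw [hj]; exact h1
      · exact h2 j hj
    simp [this, h1]
  · have : ¬ f = g := fun hc => h2 (fun j _ => by rw [hc])
    simp [h1, h2, this]
  · have : ¬ f = g := fun hc => h1 (by rw [hc])
    simp [h1, this]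
  · have : ¬ f = g := fun hc => h1 (by rw [hc])
    simp [h1, h2, this]

lemma pauliAt_smul (i : Fin N) (c : ℂ) (M : Matrix (Fin 2) (Fin 2) ℂ) :
    pauliAt N i (c • M) = c • pauliAt N i M := by
  ext f g
  simp [pauliAt, Matrix.smul_apply]

noncomputable def NF4 (p0 p1 p2 p3 : Fin N) (a b c d : Matrix (Fin 2) (Fin 2) ℂ) :
    Matrix (Fin N → Fin 2) (Fin N → Fin 2) ℂ :=
  pauliAt N p0 a * pauliAt N p1 b * pauliAt N p2 c * pauliAt N p3 d

lemma NF4_mul {p0 p1 p2 p3 : Fin N}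
    (h01 : p0 ≠ p1) (h02 : p0 ≠ p2) (h03 : p0 ≠ p3)
    (h12 : p1 ≠ p2) (h13 : p1 ≠ p3) (h23 : p2 ≠ p3)
    (a b c d a' b' c' d' : Matrix (Fin 2) (Fin 2) ℂ) :
    NF4 p0 p1 p2 p3 a b c d * NF4 p0 p1 p2 p3 a' b' c' d'
      = NF4 p0 p1 p2 p3 (a * a') (b * b') (c * c') (d * d') := by
  have c3 : Commute (pauliAt N p3 d)
      (pauliAt N p0 a' * pauliAt N p1 b' * pauliAt N p2 c') :=
    ((pauliAt_commute h03.symm d a').mul_right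
      (pauliAt_commute h13.symm d b')).mul_right (pauliAt_commute h23.symm d c')
  have c2 : Commute (pauliAt N p2 c) (pauliAt N p0 a' * pauliAt N p1 b') :=
    (pauliAt_commute h02.symm c a').mul_right (pauliAt_commute h12.symm c b')
  have c1 : Commute (pauliAt N p1 b) (pauliAt N p0 a') :=
    pauliAt_commute h01.symm b a'
  unfold NF4
  rw [Commute.mul_mul_mul_comm c3, Commute.mul_mul_mul_comm c2,
      Commute.mul_mul_mul_comm c1, pauliAt_mul_same, pauliAt_mul_same,
      pauliAt_mul_same, pauliAt_mul_same]

lemma NF4_smul0 (p0 p1 p2 p3 : Fin N) (x : ℂ) (a b c d : Matrix (Fin 2) (Fin 2) ℂ) :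
    NF4 p0 p1 p2 p3 (x • a) b c d = x • NF4 p0 p1 p2 p3 a b c d := by
  simp [NF4, pauliAt_smul, smul_mul_assoc]

lemma NF4_smul1 (p0 p1 p2 p3 : Fin N) (x : ℂ) (a b c d : Matrix (Fin 2) (Fin 2) ℂ) :
    NF4 p0 p1 p2 p3 a (x • b) c d = x • NF4 p0 p1 p2 p3 a b c d := by
  simp [NF4, pauliAt_smul, smul_mul_assoc, mul_smul_comm]

lemma NF4_smul2 (p0 p1 p2 p3 : Fin N) (x : ℂ) (a b c d : Matrix (Fin 2) (Fin 2) ℂ) :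
    NF4 p0 p1 p2 p3 a b (x • c) d = x • NF4 p0 p1 p2 p3 a b c d := by
  simp [NF4, pauliAt_smul, smul_mul_assoc, mul_smul_comm]

lemma NF4_smul3 (p0 p1 p2 p3 : Fin N) (x : ℂ) (a b c d : Matrix (Fin 2) (Fin 2) ℂ) :
    NF4 p0 p1 p2 p3 a b c (x • d) = x • NF4 p0 p1 p2 p3 a b c d := by
  simp [NF4, pauliAt_smul, smul_mul_assoc, mul_smul_comm]

noncomputable def NF3 (p0 p1 p2 : Fin N) (a b c : Matrix (Fin 2) (Fin 2) ℂ) :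
    Matrix (Fin N → Fin 2) (Fin N → Fin 2) ℂ :=
  pauliAt N p0 a * pauliAt N p1 b * pauliAt N p2 c

lemma NF3_mul {p0 p1 p2 : Fin N}
    (h01 : p0 ≠ p1) (h02 : p0 ≠ p2) (h12 : p1 ≠ p2)
    (a b c a' b' c' : Matrix (Fin 2) (Fin 2) ℂ) :
    NF3 p0 p1 p2 a b c * NF3 p0 p1 p2 a' b' c'
      = NF3 p0 p1 p2 (a * a') (b * b') (c * c') := by
  have c2 : Commute (pauliAt N p2 c) (pauliAt N p0 a' * pauliAt N p1 b') :=
    (pauliAt_commute h02.symm c a').mul_right (pauliAt_commute h12.symm c b')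
  have c1 : Commute (pauliAt N p1 b) (pauliAt N p0 a') :=
    pauliAt_commute h01.symm b a'
  unfold NF3
  rw [Commute.mul_mul_mul_comm c2, Commute.mul_mul_mul_comm c1,
      pauliAt_mul_same, pauliAt_mul_same, pauliAt_mul_same]

lemma NF3_smul0 (p0 p1 p2 : Fin N) (x : ℂ) (a b c : Matrix (Fin 2) (Fin 2) ℂ) :
    NF3 p0 p1 p2 (x • a) b c = x • NF3 p0 p1 p2 a b c := by
  simp [NF3, pauliAt_smul, smul_mul_assoc]

lemma NF3_smul1 (p0 p1 p2 : Fin N) (x : ℂ) (a b c : Matrix (Fin 2) (Fin 2) ℂ) :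
    NF3 p0 p1 p2 a (x • b) c = x • NF3 p0 p1 p2 a b c := by
  simp [NF3, pauliAt_smul, smul_mul_assoc, mul_smul_comm]

lemma NF3_smul2 (p0 p1 p2 : Fin N) (x : ℂ) (a b c : Matrix (Fin 2) (Fin 2) ℂ) :
    NF3 p0 p1 p2 a b (x • c) = x • NF3 p0 p1 p2 a b c := by
  simp [NF3, pauliAt_smul, smul_mul_assoc, mul_smul_comm]

lemma pauliAt_neg (i : Fin N) (M : Matrix (Fin 2) (Fin 2) ℂ) :
    pauliAt N i (-M) = -(pauliAt N i M) := by
  ext f g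
  simp only [pauliAt, Matrix.neg_apply, neg_mul]

lemma NF3_neg0 (p0 p1 p2 : Fin N) (a b c : Matrix (Fin 2) (Fin 2) ℂ) :
    NF3 p0 p1 p2 (-a) b c = -NF3 p0 p1 p2 a b c := by
  simp [NF3, pauliAt_neg]
lemma NF3_neg1 (p0 p1 p2 : Fin N) (a b c : Matrix (Fin 2) (Fin 2) ℂ) :
    NF3 p0 p1 p2 a (-b) c = -NF3 p0 p1 p2 a b c := by
  simp [NF3, pauliAt_neg]
lemma NF3_neg2 (p0 p1 p2 : Fin N) (a b c : Matrix (Fin 2) (Fin 2) ℂ) :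
    NF3 p0 p1 p2 a b (-c) = -NF3 p0 p1 p2 a b c := by
  simp [NF3, pauliAt_neg]
lemma NF4_neg0 (p0 p1 p2 p3 : Fin N) (a b c d : Matrix (Fin 2) (Fin 2) ℂ) :
    NF4 p0 p1 p2 p3 (-a) b c d = -NF4 p0 p1 p2 p3 a b c d := by
  simp [NF4, pauliAt_neg]
lemma NF4_neg1 (p0 p1 p2 p3 : Fin N) (a b c d : Matrix (Fin 2) (Fin 2) ℂ) :
    NF4 p0 p1 p2 p3 a (-b) c d = -NF4 p0 p1 p2 p3 a b c d := by
  simp [NF4, pauliAt_neg]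
lemma NF4_neg2 (p0 p1 p2 p3 : Fin N) (a b c d : Matrix (Fin 2) (Fin 2) ℂ) :
    NF4 p0 p1 p2 p3 a b (-c) d = -NF4 p0 p1 p2 p3 a b c d := by
  simp [NF4, pauliAt_neg]
lemma NF4_neg3 (p0 p1 p2 p3 : Fin N) (a b c d : Matrix (Fin 2) (Fin 2) ℂ) :
    NF4 p0 p1 p2 p3 a b c (-d) = -NF4 p0 p1 p2 p3 a b c d := by
  simp [NF4, pauliAt_neg]

end Base

section Table

lemma sq_x : σx * σx = 1 := by
  ext i j; fin_cases i <;> fin_cases j <;>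
    simp [σx, Matrix.mul_apply, Fin.sum_univ_two, Matrix.one_apply]
lemma sq_y : σy * σy = 1 := by
  ext i j; fin_cases i <;> fin_cases j <;>
    simp [σy, Matrix.mul_apply, Fin.sum_univ_two, Matrix.one_apply]
lemma sq_z : σz * σz = 1 := by
  ext i j; fin_cases i <;> fin_cases j <;>
    simp [σz, Matrix.mul_apply, Fin.sum_univ_two, Matrix.one_apply]
lemma mul_xy : σx * σy = I • σz := by
  ext i j; fin_cases i <;> fin_cases j <;>
    simp [σx, σy, σz, Matrix.mul_apply, Fin.sum_univ_two]
lemma mul_yx : σy * σx = (-I) • σz := by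
  ext i j; fin_cases i <;> fin_cases j <;>
    simp [σx, σy, σz, Matrix.mul_apply, Fin.sum_univ_two]
lemma mul_yz : σy * σz = I • σx := by
  ext i j; fin_cases i <;> fin_cases j <;>
    simp [σx, σy, σz, Matrix.mul_apply, Fin.sum_univ_two]
lemma mul_zy : σz * σy = (-I) • σx := by
  ext i j; fin_cases i <;> fin_cases j <;>
    simp [σx, σy, σz, Matrix.mul_apply, Fin.sum_univ_two]
lemma mul_zx : σz * σx = I • σy := by
  ext i j; fin_cases i <;> fin_cases j <;>
    simp [σx, σy, σz, Matrix.mul_apply, Fin.sum_univ_two]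
lemma mul_xz : σx * σz = (-I) • σy := by
  ext i j; fin_cases i <;> fin_cases j <;>
    simp [σx, σy, σz, Matrix.mul_apply, Fin.sum_univ_two]

end Table

section Windows
variable {N : ℕ} [NeZero N]

noncomputable def qop (a b c : Fin N) : Matrix (Fin N → Fin 2) (Fin N → Fin 2) ℂ :=
  pauliAt N a σx * pauliAt N b σy * pauliAt N c σz
    + pauliAt N a σy * pauliAt N b σz * pauliAt N c σx
    + pauliAt N a σz * pauliAt N b σx * pauliAt N c σy
    - pauliAt N a σy * pauliAt N b σx * pauliAt N c σz
    - pauliAt N a σz * pauliAt N b σy * pauliAt N c σx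
    - pauliAt N a σx * pauliAt N b σz * pauliAt N c σy

noncomputable def hop (a b : Fin N) : Matrix (Fin N → Fin 2) (Fin N → Fin 2) ℂ :=
  pauliAt N a σx * pauliAt N b σx + pauliAt N a σy * pauliAt N b σy
    + pauliAt N a σz * pauliAt N b σz

lemma window3 {p0 p1 p2 : Fin N} (h01 : p0 ≠ p1) (h02 : p0 ≠ p2) (h12 : p1 ≠ p2) :
    (qop p0 p1 p2 * hop p0 p1 - hop p0 p1 * qop p0 p1 p2)
      + (qop p0 p1 p2 * hop p1 p2 - hop p1 p2 * qop p0 p1 p2)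
      + (qop p0 p1 p2 * hop p2 p0 - hop p2 p0 * qop p0 p1 p2) = 0 := by
  have eq_q : qop p0 p1 p2
      = NF3 p0 p1 p2 σx σy σz + NF3 p0 p1 p2 σy σz σx + NF3 p0 p1 p2 σz σx σy
        - NF3 p0 p1 p2 σy σx σz - NF3 p0 p1 p2 σz σy σx - NF3 p0 p1 p2 σx σz σy := by
    simp [qop, NF3]
  have eq_h01 : hop p0 p1
      = NF3 p0 p1 p2 σx σx 1 + NF3 p0 p1 p2 σy σy 1 + NF3 p0 p1 p2 σz σz 1 := by
    simp [hop, NF3, pauliAt_one]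
  have eq_h12 : hop p1 p2
      = NF3 p0 p1 p2 1 σx σx + NF3 p0 p1 p2 1 σy σy + NF3 p0 p1 p2 1 σz σz := by
    simp [hop, NF3, pauliAt_one]
  have eq_h20 : hop p2 p0
      = NF3 p0 p1 p2 σx 1 σx + NF3 p0 p1 p2 σy 1 σy + NF3 p0 p1 p2 σz 1 σz := by
    simp only [hop, NF3, pauliAt_one, mul_one]
    rw [(pauliAt_commute h02 σx σx).eq, (pauliAt_commute h02 σy σy).eq,
        (pauliAt_commute h02 σz σz).eq]
  rw [eq_q, eq_h01, eq_h12, eq_h20]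
  simp only [mul_add, add_mul, sub_mul, mul_sub, NF3_mul h01 h02 h12,
    one_mul, mul_one, sq_x, sq_y, sq_z, mul_xy, mul_yx, mul_yz, mul_zy, mul_zx, mul_xz,
    NF3_smul0, NF3_smul1, NF3_smul2, NF3_neg0, NF3_neg1, NF3_neg2, smul_neg, neg_sub, sub_neg_eq_add, smul_smul, mul_neg, neg_mul, neg_neg,
    Complex.I_mul_I, one_smul, neg_smul]
  module

end Windows

lemma window4 {N : ℕ} [NeZero N] {p0 p1 p2 p3 : Fin N}
    (h01 : p0 ≠ p1) (h02 : p0 ≠ p2) (h03 : p0 ≠ p3)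
    (h12 : p1 ≠ p2) (h13 : p1 ≠ p3) (h23 : p2 ≠ p3) :
    (qop p0 p1 p2 * hop p0 p1 - hop p0 p1 * qop p0 p1 p2)
      + (qop p0 p1 p2 * hop p1 p2 - hop p1 p2 * qop p0 p1 p2)
      + (qop p0 p1 p2 * hop p2 p3 - hop p2 p3 * qop p0 p1 p2)
      + (qop p1 p2 p3 * hop p0 p1 - hop p0 p1 * qop p1 p2 p3)
      = (4*I) • hop p0 p1 - (4*I) • hop p1 p2 := by
  have eq_q012 : qop p0 p1 p2
      = NF4 p0 p1 p2 p3 σx σy σz 1 + NF4 p0 p1 p2 p3 σy σz σx 1 + NF4 p0 p1 p2 p3 σz σx σy 1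
        - NF4 p0 p1 p2 p3 σy σx σz 1 - NF4 p0 p1 p2 p3 σz σy σx 1
        - NF4 p0 p1 p2 p3 σx σz σy 1 := by
    simp [qop, NF4, pauliAt_one]
  have eq_q123 : qop p1 p2 p3
      = NF4 p0 p1 p2 p3 1 σx σy σz + NF4 p0 p1 p2 p3 1 σy σz σx + NF4 p0 p1 p2 p3 1 σz σx σy
        - NF4 p0 p1 p2 p3 1 σy σx σz - NF4 p0 p1 p2 p3 1 σz σy σx
        - NF4 p0 p1 p2 p3 1 σx σz σy := by
    simp [qop, NF4, pauliAt_one]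
  have eq_h01 : hop p0 p1
      = NF4 p0 p1 p2 p3 σx σx 1 1 + NF4 p0 p1 p2 p3 σy σy 1 1 + NF4 p0 p1 p2 p3 σz σz 1 1 := by
    simp [hop, NF4, pauliAt_one]
  have eq_h12 : hop p1 p2
      = NF4 p0 p1 p2 p3 1 σx σx 1 + NF4 p0 p1 p2 p3 1 σy σy 1 + NF4 p0 p1 p2 p3 1 σz σz 1 := by
    simp [hop, NF4, pauliAt_one]
  have eq_h23 : hop p2 p3
      = NF4 p0 p1 p2 p3 1 1 σx σx + NF4 p0 p1 p2 p3 1 1 σy σy + NF4 p0 p1 p2 p3 1 1 σz σz := by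
    simp [hop, NF4, pauliAt_one]
  rw [eq_q012, eq_q123, eq_h01, eq_h12, eq_h23]
  simp only [mul_add, add_mul, sub_mul, mul_sub, NF4_mul h01 h02 h03 h12 h13 h23,
    one_mul, mul_one, sq_x, sq_y, sq_z, mul_xy, mul_yx, mul_yz, mul_zy, mul_zx, mul_xz,
    NF4_smul0, NF4_smul1, NF4_smul2, NF4_smul3, NF4_neg0, NF4_neg1, NF4_neg2, NF4_neg3,
    smul_neg, neg_sub, sub_neg_eq_add, smul_smul, mul_neg, neg_mul, neg_neg,
    Complex.I_mul_I, one_smul, neg_smul]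
  module

section Assembly
variable {N : ℕ} [NeZero N]
open Fin.CommRing

lemma qop_hop_commute {a b c d e : Fin N}
    (hda : d ≠ a) (hdb : d ≠ b) (hdc : d ≠ c)
    (hea : e ≠ a) (heb : e ≠ b) (hec : e ≠ c) :
    qop a b c * hop d e - hop d e * qop a b c = 0 := by
  have base : ∀ M M' M'' W W' : Matrix (Fin 2) (Fin 2) ℂ,
      Commute (pauliAt N a M * pauliAt N b M' * pauliAt N c M'')
        (pauliAt N d W * pauliAt N e W') := by
    intro M M' M'' W W'
    exact (((pauliAt_commute hda.symm M W).mul_right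
        (pauliAt_commute hea.symm M W')).mul_left
      ((pauliAt_commute hdb.symm M' W).mul_right
        (pauliAt_commute heb.symm M' W'))).mul_left
      ((pauliAt_commute hdc.symm M'' W).mul_right
        (pauliAt_commute hec.symm M'' W'))
  have cq : ∀ W W' : Matrix (Fin 2) (Fin 2) ℂ,
      Commute (qop a b c) (pauliAt N d W * pauliAt N e W') := by
    intro W W'
    unfold qop
    exact (((((base _ _ _ _ _).add_left (base _ _ _ _ _)).add_left
      (base _ _ _ _ _)).sub_left (base _ _ _ _ _)).sub_left
      (base _ _ _ _ _)).sub_left (base _ _ _ _ _)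
  have hc : Commute (qop a b c) (hop d e) := by
    unfold hop
    exact ((cq σx σx).add_right (cq σy σy)).add_right (cq σz σz)
  rw [hc.eq, sub_self]

lemma assembly (hN : 3 ≤ N) :
    (∑ i : Fin N, qop i (i+1) (i+2)) * (∑ j : Fin N, hop j (j+1))
      = (∑ j : Fin N, hop j (j+1)) * (∑ i : Fin N, qop i (i+1) (i+2)) := by
  rw [← sub_eq_zero, Finset.sum_mul_sum, Finset.sum_mul_sum]
  nth_rewrite 2 [Finset.sum_comm]
  rw [← Finset.sum_sub_distrib]
  simp only [← Finset.sum_sub_distrib]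
  rcases eq_or_lt_of_le hN with h3 | h4
  · -- N = 3
    subst h3
    have f01 : ∀ k : Fin 3, k ≠ k + 1 := by
      intro k h
      have hk := k.isLt
      have hv := congrArg Fin.val h
      rw [Fin.val_add, show ((1:Fin 3)).val = 1 from rfl] at hv
      omega
    have f02 : ∀ k : Fin 3, k ≠ k + 2 := by
      intro k h
      have hk := k.isLt
      have hv := congrArg Fin.val h
      rw [Fin.val_add, show ((2:Fin 3)).val = 2 from rfl] at hv
      omega
    have f12 : ∀ k : Fin 3, k + 1 ≠ k + 2 := by
      intro k h
      have hk := k.isLt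
      have hv := congrArg Fin.val h
      rw [Fin.val_add, Fin.val_add, show ((1:Fin 3)).val = 1 from rfl,
        show ((2:Fin 3)).val = 2 from rfl] at hv
      omega
    refine Finset.sum_eq_zero (fun i _ => ?_)
    have reind : ∑ j : Fin 3,
          (qop i (i+1) (i+2) * hop j (j+1) - hop j (j+1) * qop i (i+1) (i+2))
        = ∑ d : Fin 3,
          (qop i (i+1) (i+2) * hop (i+d) (i+d+1) - hop (i+d) (i+d+1) * qop i (i+1) (i+2)) :=
      (Fintype.sum_equiv (Equiv.addLeft i)
        (fun d => qop i (i+1) (i+2) * hop (i+d) (i+d+1) - hop (i+d) (i+d+1) * qop i (i+1) (i+2))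
        (fun j => qop i (i+1) (i+2) * hop j (j+1) - hop j (j+1) * qop i (i+1) (i+2))
        (fun d => rfl)).symm
    rw [reind, Fin.sum_univ_three]
    have e0 : i + 0 = i := add_zero i
    have e1 : i + 1 + 1 = i + 2 := by ring
    have e2 : i + 2 + 1 = i := by
      have h21 : (2 + 1 : Fin 3) = 0 := rfl
      rw [add_assoc, h21, add_zero]
    rw [e0, e1, e2]
    exact window3 (f01 i) (f02 i) (f12 i)
  · -- 4 ≤ N
    have key : ∀ a b : Fin N, a.val ≠ b.val → a ≠ b := fun a b h hc => h (congrArg Fin.val hc)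
    have n10 : (1 : Fin N) ≠ 0 := key _ _ (by
      rw [show ((1:Fin N)).val = 1 % N from rfl, show ((0:Fin N)).val = 0 % N from rfl,
        Nat.mod_eq_of_lt (by omega), Nat.zero_mod]
      omega)
    have n20 : (2 : Fin N) ≠ 0 := key _ _ (by
      rw [show ((2:Fin N)).val = 2 % N from rfl, show ((0:Fin N)).val = 0 % N from rfl,
        Nat.mod_eq_of_lt (by omega), Nat.zero_mod]
      omega)
    have n30 : (3 : Fin N) ≠ 0 := key _ _ (by
      rw [show ((3:Fin N)).val = 3 % N from rfl, show ((0:Fin N)).val = 0 % N from rfl,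
        Nat.mod_eq_of_lt (by omega), Nat.zero_mod]
      omega)
    have n21 : (2 : Fin N) ≠ 1 := key _ _ (by
      rw [show ((2:Fin N)).val = 2 % N from rfl, show ((1:Fin N)).val = 1 % N from rfl,
        Nat.mod_eq_of_lt (by omega), Nat.mod_eq_of_lt (by omega)]
      omega)
    have n31 : (3 : Fin N) ≠ 1 := key _ _ (by
      rw [show ((3:Fin N)).val = 3 % N from rfl, show ((1:Fin N)).val = 1 % N from rfl,
        Nat.mod_eq_of_lt (by omega), Nat.mod_eq_of_lt (by omega)]
      omega)
    have n32 : (3 : Fin N) ≠ 2 := key _ _ (by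
      rw [show ((3:Fin N)).val = 3 % N from rfl, show ((2:Fin N)).val = 2 % N from rfl,
        Nat.mod_eq_of_lt (by omega), Nat.mod_eq_of_lt (by omega)]
      omega)
    have nm0 : (-1 : Fin N) ≠ 0 := fun h => n10 (by rwa [neg_eq_zero] at h)
    have nm1 : (-1 : Fin N) ≠ 1 := fun h => n20 (by
      have : (2:Fin N) = -1 + 1 := by rw [h]; ring
      rw [this, neg_add_cancel])
    have nm2 : (-1 : Fin N) ≠ 2 := fun h => n30 (by
      have : (3:Fin N) = -1 + 1 := by rw [h]; ring
      rw [this, neg_add_cancel])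
    have d01 : ∀ i : Fin N, i ≠ i + 1 := fun i h => n10 (left_eq_add.mp h)
    have d02 : ∀ i : Fin N, i ≠ i + 2 := fun i h => n20 (left_eq_add.mp h)
    have d03 : ∀ i : Fin N, i ≠ i + 3 := fun i h => n30 (left_eq_add.mp h)
    have d12 : ∀ i : Fin N, i + 1 ≠ i + 2 := fun i h => n21.symm (add_left_cancel h)
    have d13 : ∀ i : Fin N, i + 1 ≠ i + 3 := fun i h => n31.symm (add_left_cancel h)
    have d23 : ∀ i : Fin N, i + 2 ≠ i + 3 := fun i h => n32.symm (add_left_cancel h)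
    have dm0 : ∀ i : Fin N, i + (-1) ≠ i := fun i h => nm0 (by
      have := add_eq_left.mp h; exact this)
    have dm1 : ∀ i : Fin N, i + (-1) ≠ i + 1 := fun i h => nm1 (add_left_cancel h)
    have dm2 : ∀ i : Fin N, i + (-1) ≠ i + 2 := fun i h => nm2 (add_left_cancel h)
    have inner : ∀ i : Fin N,
        ∑ j : Fin N, (qop i (i+1) (i+2) * hop j (j+1) - hop j (j+1) * qop i (i+1) (i+2))
        = (qop i (i+1) (i+2) * hop (i + (-1)) (i + (-1) + 1)
            - hop (i + (-1)) (i + (-1) + 1) * qop i (i+1) (i+2))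
          + ((qop i (i+1) (i+2) * hop i (i+1) - hop i (i+1) * qop i (i+1) (i+2))
          + ((qop i (i+1) (i+2) * hop (i+1) (i+1+1) - hop (i+1) (i+1+1) * qop i (i+1) (i+2))
          + (qop i (i+1) (i+2) * hop (i+2) (i+2+1) - hop (i+2) (i+2+1) * qop i (i+1) (i+2)))) := by
      intro i
      have hz : ∀ j ∈ (Finset.univ : Finset (Fin N)),
          j ∉ ({i + (-1), i, i + 1, i + 2} : Finset (Fin N)) →
          qop i (i+1) (i+2) * hop j (j+1) - hop j (j+1) * qop i (i+1) (i+2) = 0 := by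
        intro j _ hj
        simp only [Finset.mem_insert, Finset.mem_singleton] at hj
        push_neg at hj
        obtain ⟨hm, h0, h1, h2⟩ := hj
        refine qop_hop_commute h0 h1 h2 (fun h => hm ?_) (fun h => h0 ?_) (fun h => h1 ?_)
        · rw [eq_sub_of_add_eq h, sub_eq_add_neg]
        · exact add_right_cancel h
        · exact add_right_cancel (h.trans (by ring : i + 2 = (i+1) + 1))
      rw [← Finset.sum_subset
        (Finset.subset_univ ({i + (-1), i, i + 1, i + 2} : Finset (Fin N))) hz]
      have m1 : i + (-1) ∉ ({i, i + 1, i + 2} : Finset (Fin N)) := by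
        simp only [Finset.mem_insert, Finset.mem_singleton]
        push_neg
        exact ⟨dm0 i, dm1 i, dm2 i⟩
      have m2 : i ∉ ({i + 1, i + 2} : Finset (Fin N)) := by
        simp only [Finset.mem_insert, Finset.mem_singleton]
        push_neg
        exact ⟨d01 i, d02 i⟩
      have m3 : (i + 1) ∉ ({i + 2} : Finset (Fin N)) := by
        simp only [Finset.mem_singleton]
        exact d12 i
      rw [show ({i + (-1), i, i + 1, i + 2} : Finset (Fin N))
          = insert (i + (-1)) (insert i (insert (i+1) {i+2})) from rfl,
        Finset.sum_insert m1, Finset.sum_insert m2, Finset.sum_insert m3,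
        Finset.sum_singleton]
    simp only [inner]
    rw [Finset.sum_add_distrib]
    have reind1 : ∑ i : Fin N,
          (qop i (i+1) (i+2) * hop (i + (-1)) (i + (-1) + 1)
            - hop (i + (-1)) (i + (-1) + 1) * qop i (i+1) (i+2))
        = ∑ i : Fin N,
          (qop (i+1) (i+1+1) (i+1+2) * hop i (i+1) - hop i (i+1) * qop (i+1) (i+1+1) (i+1+2)) := by
      refine Fintype.sum_equiv (Equiv.addRight (1 : Fin N))
        (fun i => qop (i+1) (i+1+1) (i+1+2) * hop i (i+1) - hop i (i+1) * qop (i+1) (i+1+1) (i+1+2))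
        (fun i => qop i (i+1) (i+2) * hop (i + (-1)) (i + (-1) + 1)
            - hop (i + (-1)) (i + (-1) + 1) * qop i (i+1) (i+2)) (fun i => ?_) |>.symm
      have g1 : i + 1 + (-1) = i := by ring
      have g2 : i + 1 + (-1) + 1 = i + 1 := by ring
      simp only [Equiv.coe_addRight, g2, g1]
    rw [reind1, ← Finset.sum_add_distrib]
    have perI : ∀ i : Fin N,
        ((qop (i+1) (i+1+1) (i+1+2) * hop i (i+1) - hop i (i+1) * qop (i+1) (i+1+1) (i+1+2))
          + ((qop i (i+1) (i+2) * hop i (i+1) - hop i (i+1) * qop i (i+1) (i+2))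
          + ((qop i (i+1) (i+2) * hop (i+1) (i+1+1) - hop (i+1) (i+1+1) * qop i (i+1) (i+2))
          + (qop i (i+1) (i+2) * hop (i+2) (i+2+1) - hop (i+2) (i+2+1) * qop i (i+1) (i+2)))))
        = (4*I) • hop i (i+1) - (4*I) • hop (i+1) (i+1+1) := by
      intro i
      have g1 : i + 1 + 1 = i + 2 := by ring
      have g2 : i + 1 + 2 = i + 3 := by ring
      have g3 : i + 2 + 1 = i + 3 := by ring
      rw [g1, g2, g3]
      have W := window4 (d01 i) (d02 i) (d03 i) (d12 i) (d13 i) (d23 i)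
      rw [← W]
      abel
    simp only [perI]
    rw [Finset.sum_sub_distrib]
    have reind2 : ∑ i : Fin N, (4*I) • hop (i+1) (i+1+1)
        = ∑ i : Fin N, (4*I) • hop i (i+1) :=
      Fintype.sum_equiv (Equiv.addRight (1 : Fin N))
        (fun i => (4*I) • hop (i+1) (i+1+1)) (fun i => (4*I) • hop i (i+1))
        (fun i => by simp only [Equiv.coe_addRight])
    rw [reind2, sub_self]

end Assembly

theorem Q3_commutes_with_Heisenberg
    (N : ℕ) [NeZero N] (hN : 3 ≤ N)
    (H : Matrix (Fin N → Fin 2) (Fin N → Fin 2) ℂ)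
    (hH : H = ∑ i : Fin N,
      (pauliAt N i σx * pauliAt N (i + 1) σx
        + pauliAt N i σy * pauliAt N (i + 1) σy
        + pauliAt N i σz * pauliAt N (i + 1) σz))
    (Q₃ : Matrix (Fin N → Fin 2) (Fin N → Fin 2) ℂ)
    (hQ₃ : Q₃ = ∑ i : Fin N,
      (pauliAt N i σx * pauliAt N (i + 1) σy * pauliAt N (i + 2) σz
        + pauliAt N i σy * pauliAt N (i + 1) σz * pauliAt N (i + 2) σx
        + pauliAt N i σz * pauliAt N (i + 1) σx * pauliAt N (i + 2) σy
        - pauliAt N i σy * pauliAt N (i + 1) σx * pauliAt N (i + 2) σz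
        - pauliAt N i σz * pauliAt N (i + 1) σy * pauliAt N (i + 2) σx
        - pauliAt N i σx * pauliAt N (i + 1) σz * pauliAt N (i + 2) σy)) :
    Q₃ * H = H * Q₃ := by
  have hq : Q₃ = ∑ i : Fin N, qop i (i+1) (i+2) := by
    rw [hQ₃]; rfl
  have hh : H = ∑ j : Fin N, hop j (j+1) := by
    rw [hH]; rfl
  rw [hq, hh]
  exact assembly hN
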